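/- Let M be an N x N real matrix with M_{ii} = 1 for all i, M_{ij} <= 0 for all i != j, and all row sums zero (sum_{j=1}^N M_{ij} = 0 for every i). Then there exists a vector p in [0,1]^N with sum_{i=1}^N p_i = 1 such that M^T p = 0 (equivalently, sum_{i=1}^N p_i M_{ij} = 0 for every j in {1,...,N}). Consequently, the synthetic control estimator with weight matrix M is unbiased when the treated unit is drawn with probabilities p. -/

import Mathlib

open Finset

/-- For every SC weight matrix (unit diagonal, nonpositive off-diagonal entries, zero row
sums) there exists a propensity-score vector p with Mᵀ p = 0, i.e. a distribution over
treated units under which the SC estimator is unbiased. -/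
theorem stmt11 (N : ℕ) (hN : 0 < N) (M : Fin N → Fin N → ℝ)
    (hdiag : ∀ i, M i i = 1)
    (hoff : ∀ i j, i ≠ j → M i j ≤ 0)
    (hrow : ∀ i, ∑ j, M i j = 0) :
    ∃ p : Fin N → ℝ, (∀ i, 0 ≤ p i ∧ p i ≤ 1) ∧ (∑ i, p i = 1) ∧
      ∀ j, ∑ i, p i * M i j = 0 := by
  classical
  set A : Fin N → Fin N → ℝ := fun i j => (if i = j then (1:ℝ) else 0) - M i j with hA
  have hApos : ∀ i j, 0 ≤ A i j := by
    intro i j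
    by_cases h : i = j
    · subst h; simp [hA, hdiag]
    · have := hoff i j h; simp [hA, h]; linarith
  have hArow : ∀ i, ∑ j, A i j = 1 := by
    intro i
    simp [hA, Finset.sum_sub_distrib, hrow i]
  let T : (Fin N → ℝ) →ₗ[ℝ] (Fin N → ℝ) :=
    { toFun := fun p j => ∑ i, p i * A i j
      map_add' := by
        intro x y; funext j
        simp [add_mul, Finset.sum_add_distrib]
      map_smul' := by
        intro c x; funext j
        simp [Finset.mul_sum, mul_assoc] }
  have hTapp : ∀ (p : Fin N → ℝ) (j : Fin N), T p j = ∑ i, p i * A i j := fun _ _ => rfl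
  have hTmem : ∀ p ∈ stdSimplex ℝ (Fin N), T p ∈ stdSimplex ℝ (Fin N) := by
    intro p hp
    obtain ⟨hp0, hp1⟩ := hp
    constructor
    · intro j
      rw [hTapp]
      exact Finset.sum_nonneg fun i _ => mul_nonneg (hp0 i) (hApos i j)
    · rw [show ∑ j, T p j = ∑ j, ∑ i, p i * A i j from rfl, Finset.sum_comm]
      calc ∑ i, ∑ j, p i * A i j = ∑ i, p i * ∑ j, A i j := by
              simp [Finset.mul_sum]
        _ = 1 := by simp [hArow, hp1]
  let q : Fin N → ℝ := fun _ => (N : ℝ)⁻¹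
  have hNne : (N : ℝ) ≠ 0 := Nat.cast_ne_zero.mpr hN.ne'
  have hq : q ∈ stdSimplex ℝ (Fin N) := by
    constructor
    · intro i; positivity
    · simp [q, Finset.card_univ, mul_inv_cancel₀ hNne]
  let u : ℕ → (Fin N → ℝ) := fun k => (T : (Fin N → ℝ) → (Fin N → ℝ))^[k] q
  have hu0 : u 0 = q := rfl
  have huS : ∀ k, u (k + 1) = T (u k) := fun k => Function.iterate_succ_apply' _ k q
  have humem : ∀ k, u k ∈ stdSimplex ℝ (Fin N) := by
    intro k
    induction k with
    | zero => exact hq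
    | succ n ih => rw [huS]; exact hTmem _ ih
  let v : ℕ → (Fin N → ℝ) := fun n => ((n : ℝ))⁻¹ • ∑ k ∈ Finset.range n, u k
  have hvmem : ∀ n, 0 < n → v n ∈ stdSimplex ℝ (Fin N) := by
    intro n hn
    have hnne : (n : ℝ) ≠ 0 := Nat.cast_ne_zero.mpr hn.ne'
    constructor
    · intro i
      have : 0 ≤ (∑ k ∈ Finset.range n, u k) i := by
        rw [Finset.sum_apply]
        exact Finset.sum_nonneg fun k _ => (humem k).1 i
      have h2 : (0:ℝ) ≤ (n:ℝ)⁻¹ := by positivity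
      simpa [v] using mul_nonneg h2 this
    · have : ∑ i, (∑ k ∈ Finset.range n, u k) i = n := by
        simp only [Finset.sum_apply]
        rw [Finset.sum_comm]
        simp [(fun k => (humem k).2 : ∀ k, ∑ i, u k i = 1)]
      simp only [v, Pi.smul_apply, smul_eq_mul, ← Finset.mul_sum, this]
      rw [inv_mul_cancel₀ hnne]
  have hkey : ∀ n, T (v n) - v n = (n : ℝ)⁻¹ • (u n - u 0) := by
    intro n
    have h1 : T (∑ k ∈ Finset.range n, u k) =
        (∑ k ∈ Finset.range n, u k) + u n - u 0 := by
      rw [map_sum]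
      have : ∑ k ∈ Finset.range n, T (u k) = ∑ k ∈ Finset.range n, u (k + 1) := by
        exact Finset.sum_congr rfl fun k _ => (huS k).symm
      rw [this]
      have h2 := Finset.sum_range_succ' u n
      have h3 := Finset.sum_range_succ u n
      -- ∑_{k<n+1} u k = ∑_{k<n} u (k+1) + u 0  and = ∑_{k<n} u k + u n
      have : ∑ k ∈ Finset.range n, u (k + 1) + u 0 =
          ∑ k ∈ Finset.range n, u k + u n := by rw [← h2, h3]
      linear_combination (norm := abel) this
    calc T (v n) - v n = (n : ℝ)⁻¹ • T (∑ k ∈ Finset.range n, u k)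
          - (n : ℝ)⁻¹ • ∑ k ∈ Finset.range n, u k := by rw [map_smul]
      _ = (n : ℝ)⁻¹ • (u n - u 0) := by rw [h1, ← smul_sub]; congr 1; abel
  have hbound : ∀ k, ‖u k‖ ≤ 1 := by
    intro k
    rw [pi_norm_le_iff_of_nonneg zero_le_one]
    intro i
    rw [Real.norm_eq_abs, abs_le]
    refine ⟨by linarith [(humem k).1 i], ?_⟩
    calc u k i ≤ ∑ j, u k j :=
          Finset.single_le_sum (fun j _ => (humem k).1 j) (Finset.mem_univ i)
      _ = 1 := (humem k).2
  have hdiff : Filter.Tendsto (fun n => T (v n) - v n) Filter.atTop (nhds 0) := by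
    rw [tendsto_iff_norm_sub_tendsto_zero]
    simp only [sub_zero]
    apply squeeze_zero (f := fun n : ℕ => ‖T (v n) - v n‖) (g := fun n : ℕ => 2 * (n : ℝ)⁻¹) (fun n => norm_nonneg _)
    · intro n
      rw [hkey n, norm_smul]
      have : ‖u n - u 0‖ ≤ 2 := by
        calc ‖u n - u 0‖ ≤ ‖u n‖ + ‖u 0‖ := norm_sub_le _ _
          _ ≤ 2 := by linarith [hbound n, hbound 0]
      calc ‖(n:ℝ)⁻¹‖ * ‖u n - u 0‖ ≤ ‖(n:ℝ)⁻¹‖ * 2 :=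
            mul_le_mul_of_nonneg_left this (norm_nonneg _)
        _ = 2 * (n:ℝ)⁻¹ := by
            rw [Real.norm_eq_abs, abs_of_nonneg (by positivity)]; ring
    · have h0 : Filter.Tendsto (fun n : ℕ => ((n : ℝ))⁻¹) Filter.atTop (nhds 0) :=
        tendsto_inv_atTop_zero.comp tendsto_natCast_atTop_atTop
      have := h0.const_mul (2:ℝ)
      simpa using this
  obtain ⟨p, hpmem, φ, hφ, hlim⟩ :=
    (isCompact_stdSimplex ℝ (Fin N)).tendsto_subseq
      (x := fun n => v (n + 1)) (fun n => hvmem (n + 1) n.succ_pos)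
  have hTc : Continuous (T : (Fin N → ℝ) → (Fin N → ℝ)) :=
    T.continuous_of_finiteDimensional
  have hlimT : Filter.Tendsto (fun n => T (v (φ n + 1))) Filter.atTop (nhds (T p)) :=
    (hTc.tendsto p).comp hlim
  have hlimD : Filter.Tendsto (fun n => T (v (φ n + 1)) - v (φ n + 1))
      Filter.atTop (nhds 0) := by
    have hmono : Filter.Tendsto (fun n => φ n + 1) Filter.atTop Filter.atTop :=
      Filter.tendsto_atTop_mono (fun n => (hφ.le_apply).trans (Nat.le_succ _))
        Filter.tendsto_id
    exact hdiff.comp hmono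
  have hfix : T p = p := by
    have h1 : Filter.Tendsto (fun n => v (φ n + 1)) Filter.atTop (nhds (T p - 0)) := by
      have := hlimT.sub hlimD
      simpa using this
    have h2 : Filter.Tendsto (fun n => v (φ n + 1)) Filter.atTop (nhds p) := hlim
    have := tendsto_nhds_unique h1 h2
    simpa using this
  refine ⟨p, ?_, hpmem.2, ?_⟩
  · intro i
    refine ⟨hpmem.1 i, ?_⟩
    calc p i ≤ ∑ j, p j :=
          Finset.single_le_sum (fun j _ => hpmem.1 j) (Finset.mem_univ i)
      _ = 1 := hpmem.2
  · intro j
    have hMa : ∀ i, M i j = (if i = j then (1:ℝ) else 0) - A i j := by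
      intro i; simp [hA]
    have : ∑ i, p i * M i j
        = ∑ i, (p i * (if i = j then (1:ℝ) else 0) - p i * A i j) := by
      refine Finset.sum_congr rfl fun i _ => ?_
      rw [hMa i, mul_sub]
    rw [this, Finset.sum_sub_distrib]
    have h1 : ∑ i, p i * (if i = j then (1:ℝ) else 0) = p j := by
      simp [mul_ite]
    have h2 : ∑ i, p i * A i j = p j := by
      have := congrFun hfix j
      rw [hTapp] at this
      exact this
    rw [h1, h2, sub_self]
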